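/- Let d be a positive integer, let a ∈ ℝ^d satisfy ‖a‖₂ ≤ 1, and let s ∈ ℝ^d have all entries in {−1, +1}. Then ∑_{i=1}^d (1/√d − aᵢ sᵢ) ≥ (√d/2) · ∑_{i=1}^d (1/√d − aᵢ sᵢ)². -/
import Mathlib


open Finset

/-- for ‖a‖₂ ≤ 1 and s with ±1 entries,
∑ᵢ (1/√d − aᵢsᵢ) ≥ (√d/2)·∑ᵢ (1/√d − aᵢsᵢ)². -/
theorem stmt_4 {d : ℕ} (hd : 0 < d) (a s : Fin d → ℝ)
    (ha : Real.sqrt (∑ i, a i ^ 2) ≤ 1)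
    (hs : ∀ i, s i = 1 ∨ s i = -1) :
    (Real.sqrt d / 2) * ∑ i, (1 / Real.sqrt d - a i * s i) ^ 2
      ≤ ∑ i, (1 / Real.sqrt d - a i * s i) := by
  have h0 : (0:ℝ) ≤ ∑ i, a i ^ 2 := Finset.sum_nonneg fun i _ => sq_nonneg _
  have hS : ∑ i, a i ^ 2 ≤ 1 := by
    nlinarith [Real.sq_sqrt h0, Real.sqrt_nonneg (∑ i, a i ^ 2)]
  have hdR : (0:ℝ) < (d:ℝ) := by exact_mod_cast hd
  have hr : (0:ℝ) < Real.sqrt d := Real.sqrt_pos.2 hdR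
  have hr2 : Real.sqrt d ^ 2 = (d:ℝ) := Real.sq_sqrt hdR.le
  have key : ∀ i : Fin d, (1 / Real.sqrt d - a i * s i) ^ 2
      = 1 / (d:ℝ) - 2 * (a i * s i) / Real.sqrt d + a i ^ 2 := by
    intro i
    have h1 : s i ^ 2 = 1 := by rcases hs i with h | h <;> rw [h] <;> ring
    have h2 : (a i * s i) ^ 2 = a i ^ 2 := by rw [mul_pow, h1, mul_one]
    have h3 : (1 / Real.sqrt d) ^ 2 = 1 / (d:ℝ) := by rw [div_pow, one_pow, hr2]
    have h4 : 2 * (a i * s i) / Real.sqrt d = 2 * (1 / Real.sqrt d) * (a i * s i) := by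
      ring
    rw [h4, ← h2, ← h3]; ring
  rw [Finset.sum_congr rfl fun i _ => key i]
  rw [Finset.sum_add_distrib, Finset.sum_sub_distrib, Finset.sum_const,
    Finset.card_fin, ← Finset.sum_div, Finset.sum_sub_distrib, Finset.sum_const,
    Finset.card_fin]
  set T := ∑ i, a i * s i
  set S := ∑ i, a i ^ 2
  have hd1 : (d:ℝ) * (1 / (d:ℝ)) = 1 := by field_simp
  have hdd : (d:ℝ) / Real.sqrt d = Real.sqrt d := by
    rw [Real.div_sqrt]
  have h2T : ∑ i, 2 * (a i * s i) = 2 * T := by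
    rw [← Finset.mul_sum]
  rw [h2T, nsmul_eq_mul, nsmul_eq_mul, hd1]
  have : Real.sqrt d / 2 * (1 - 2 * T / Real.sqrt d + S)
      = Real.sqrt d / 2 * (1 + S) - T := by
    field_simp
    ring
  rw [this]
  have : (d:ℝ) * (1 / Real.sqrt d) = Real.sqrt d := by
    rw [mul_one_div, hdd]
  rw [this]
  nlinarith [hr, hS]
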